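/- arXiv:0911.4526 — 2 statements merged into one kernel-verified Lean document; each statement's English description precedes it below -/
import Mathlib

section
/- For a closed convex set K ⊆ ℝ^k with nonempty interior and a point z in K, the distance from z to the boundary of K equals the infimum over all supporting affine functionals ℓ of K of ℓ(z), where a supporting affine functional at a boundary point v is an affine map ℓ : ℝ^k → ℝ with ℓ ≥ 0 on K, ℓ(v) = 0, and |∇ℓ| = 1. -/
open Metric

/-- Supporting hyperplane at a frontier point of a convex set with nonempty interior. -/
lemma exists_support {k : ℕ} {K : Set (EuclideanSpace ℝ (Fin k))}
    (hconv : Convex ℝ K) (hint : (interior K).Nonempty)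
    {v : EuclideanSpace ℝ (Fin k)} (hv : v ∈ frontier K) :
    ∃ ν : EuclideanSpace ℝ (Fin k), ‖ν‖ = 1 ∧ ∀ w ∈ K, (0:ℝ) ≤ inner ℝ ν (w - v) := by
  obtain ⟨x, hx⟩ := hint
  have hvi : v ∉ interior K := hv.2
  obtain ⟨f, hf⟩ := geometric_hahn_banach_open_point (hconv.interior) isOpen_interior hvi
  -- f a < f v for all a ∈ interior K; extend to f w ≤ f v for w ∈ K
  have hfK : ∀ w ∈ K, f w ≤ f v := by
    intro w hw
    have key : ∀ t : ℝ, t ∈ Set.Ico (0:ℝ) 1 → f ((1 - t) • x + t • w) < f v := by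
      intro t ht
      refine hf _ (hconv.combo_interior_closure_mem_interior hx (subset_closure hw) ?_ ht.1 ?_)
      · linarith [ht.2]
      · ring
    have hcont : Continuous fun t : ℝ => f ((1 - t) • x + t • w) := by fun_prop
    have htend : Filter.Tendsto (fun t : ℝ => f ((1 - t) • x + t • w)) (nhdsWithin 1 (Set.Iio 1))
        (nhds (f w)) := by
      have h1 : Filter.Tendsto (fun t : ℝ => f ((1 - t) • x + t • w)) (nhdsWithin 1 (Set.Iio 1))
          (nhds (f ((1 - (1:ℝ)) • x + (1:ℝ) • w))) :=
        (hcont.tendsto 1).mono_left nhdsWithin_le_nhds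
      simpa using h1
    refine le_of_tendsto htend ?_
    filter_upwards [Ico_mem_nhdsLT one_pos] with t ht2
    exact (key t ⟨ht2.1, ht2.2⟩).le
  -- f is nonzero
  have hfx : f x < f v := hf x hx
  set y : EuclideanSpace ℝ (Fin k) := (InnerProductSpace.toDual ℝ _).symm f with hy
  have hyf : ∀ u : EuclideanSpace ℝ (Fin k), (inner ℝ y u : ℝ) = f u := fun u =>
    InnerProductSpace.toDual_symm_apply
  have hy0 : y ≠ 0 := by
    intro h
    have : (inner ℝ y (x - v) : ℝ) = f (x - v) := hyf _
    rw [h, inner_zero_left, map_sub] at this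
    linarith [this.symm]
  have hyn : (0:ℝ) < ‖y‖ := norm_pos_iff.mpr hy0
  refine ⟨-(‖y‖⁻¹ • y), ?_, ?_⟩
  · rw [norm_neg, norm_smul, norm_inv, norm_norm, inv_mul_cancel₀ hyn.ne']
  · intro w hw
    have h1 : (inner ℝ y (w - v) : ℝ) = f w - f v := by rw [hyf, map_sub]
    have h2 : (inner ℝ (-(‖y‖⁻¹ • y)) (w - v) : ℝ) = ‖y‖⁻¹ * (f v - f w) := by
      rw [inner_neg_left, real_inner_smul_left, h1]; ring
    rw [h2]
    have h3 := hfK w hw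
    have h4 : (0:ℝ) < ‖y‖⁻¹ := inv_pos.mpr hyn
    nlinarith

/-- For a closed convex set `K ⊆ ℝ^k` with nonempty interior (and nonempty
boundary) and `z ∈ K`, the distance from `z` to `∂K` equals the infimum of `ℓ(z)` over all
supporting affine functionals `ℓ` of `K`, where a supporting affine functional at `v ∈ ∂K`
is `ℓ(w) = ν·(w − v)` with `‖ν‖ = 1` and `ℓ ≥ 0` on `K`. -/
theorem stmt0 {k : ℕ} (K : Set (EuclideanSpace ℝ (Fin k)))
    (hK : IsClosed K) (hconv : Convex ℝ K) (hint : (interior K).Nonempty)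
    (hfr : (frontier K).Nonempty) (z : EuclideanSpace ℝ (Fin k)) (hz : z ∈ K) :
    infDist z (frontier K) =
      sInf {r : ℝ | ∃ v ν : EuclideanSpace ℝ (Fin k), v ∈ frontier K ∧ ‖ν‖ = 1 ∧
        (∀ w ∈ K, (0:ℝ) ≤ inner ℝ ν (w - v)) ∧ r = inner ℝ ν (z - v)} := by
  set S := {r : ℝ | ∃ v ν : EuclideanSpace ℝ (Fin k), v ∈ frontier K ∧ ‖ν‖ = 1 ∧
      (∀ w ∈ K, (0:ℝ) ≤ inner ℝ ν (w - v)) ∧ r = inner ℝ ν (z - v)} with hS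
  have hSne : S.Nonempty := by
    obtain ⟨v, hv⟩ := hfr
    obtain ⟨ν, hν, hpos⟩ := exists_support hconv hint hv
    exact ⟨_, v, ν, hv, hν, hpos, rfl⟩
  have hSnn : ∀ r ∈ S, (0:ℝ) ≤ r := by
    rintro r ⟨v, ν, hv, hν, hpos, rfl⟩
    exact hpos z hz
  -- lower bound: infDist z (frontier K) ≤ r for every r ∈ S
  have hlb : ∀ r ∈ S, infDist z (frontier K) ≤ r := by
    rintro r ⟨v, ν, hv, hν, hpos, rfl⟩
    by_contra hcon
    push_neg at hcon
    have h0 : (0:ℝ) ≤ inner ℝ ν (z - v) := hpos z hz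
    set d := infDist z (frontier K) with hd
    obtain ⟨t, ht1, ht2⟩ := exists_between hcon
    have ht0 : 0 < t := lt_of_le_of_lt h0 ht1
    have hdpos : 0 < d := ht0.trans ht2
    -- the open ball of radius d around z is inside K
    have hzfr : z ∉ frontier K := by
      intro h
      have : d ≤ dist z z := infDist_le_dist_of_mem h
      simp at this; linarith
    have hzint : z ∈ interior K := by
      rcases (hK.closure_eq ▸ (frontier_subset_closure (s := K))) with _
      by_contra h
      exact hzfr ⟨subset_closure hz, h⟩
    have hsub : ball z d ⊆ interior K ∪ Kᶜ := by
      intro x hx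
      have hxfr : x ∉ frontier K := by
        intro h
        have : d ≤ dist z x := infDist_le_dist_of_mem h
        rw [mem_ball, dist_comm] at hx
        linarith
      by_cases hxK : x ∈ K
      · left
        by_contra h
        exact hxfr ⟨subset_closure hxK, h⟩
      · right; exact hxK
    have hball : ball z d ⊆ interior K := by
      refine (convex_ball z d).isPreconnected.subset_left_of_subset_union
        isOpen_interior hK.isOpen_compl ?_ hsub ⟨z, mem_ball_self hdpos, hzint⟩
      exact Set.disjoint_left.mpr fun a ha hc => hc (interior_subset ha)
    have hmem : z - t • ν ∈ K := by
      refine interior_subset (hball ?_)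
      rw [mem_ball, dist_eq_norm]
      simp [norm_smul, abs_of_pos ht0, hν]
      linarith
    have := hpos _ hmem
    have hcalc : (inner ℝ ν (z - t • ν - v) : ℝ) = inner ℝ ν (z - v) - t := by
      have h1 : z - t • ν - v = (z - v) - t • ν := by abel
      rw [h1, inner_sub_right, real_inner_smul_right, real_inner_self_eq_norm_sq, hν]
      ring
    rw [hcalc] at this
    linarith
  refine le_antisymm (le_csInf hSne hlb) ?_
  -- upper: pick closest frontier point and a supporting functional there
  obtain ⟨v, hv, hdv⟩ := isClosed_frontier.exists_infDist_eq_dist hfr z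
  obtain ⟨ν, hν, hpos⟩ := exists_support hconv hint hv
  have hmemS : (inner ℝ ν (z - v) : ℝ) ∈ S := ⟨v, ν, hv, hν, hpos, rfl⟩
  have hle : (inner ℝ ν (z - v) : ℝ) ≤ infDist z (frontier K) := by
    calc (inner ℝ ν (z - v) : ℝ) ≤ ‖ν‖ * ‖z - v‖ := real_inner_le_norm ν (z - v)
    _ = dist z v := by rw [hν, one_mul, dist_eq_norm]
    _ = infDist z (frontier K) := hdv.symm
  exact (csInf_le ⟨0, hSnn⟩ hmemS).trans hle
end

section
/- Let u : Ω → ℝ^k be C^{2,1} on an open set Ω ⊆ ℝⁿ × (0,∞) satisfying ∂u/∂t = Δu + φ(u) componentwise, where φ : ℝ^k → ℝ^k is Lipschitz. Let K be a closed convex set with u(x,t) ∈ K for all (x,t) ∈ Ω, and suppose φ(v)·ν ≥ 0 for every v ∈ ∂K and every inward pointing unit vector ν at v. Let (x̂,t̂) ∈ Ω, v ∈ ∂K with |u(x̂,t̂) − v| = dist(u(x̂,t̂), ∂K), and ℓ(z) = ν·(z−v) a supporting affine functional at v. Then at (x̂,t̂), the function ℓ̄(x,t) = ℓ(u(x,t))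 satisfies ℓ̄_t − Δℓ̄ + p·ℓ̄ ≥ 0, where p is a Lipschitz constant for φ. -/
open Metric

private lemma cross_frontier {X : Type*} [TopologicalSpace X] {s t : Set X}
    (hs : IsPreconnected s) (h1 : (s ∩ t).Nonempty) (h2 : (s \ t).Nonempty) :
    (s ∩ frontier t).Nonempty := by
  by_contra hne
  rw [Set.not_nonempty_iff_eq_empty] at hne
  have hdisj : ∀ x ∈ s, x ∉ frontier t := by
    intro x hx hxf
    exact absurd (Set.mem_inter hx hxf) (by simp [hne])
  have hsub : s ⊆ interior t ∪ (closure t)ᶜ := by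
    intro x hx
    by_cases hxt : x ∈ closure t
    · left
      rcases (closure_eq_interior_union_frontier t ▸ hxt) with h | h
      · exact h
      · exact absurd h (hdisj x hx)
    · right; exact hxt
  obtain ⟨x1, hx1s, hx1t⟩ := h1
  obtain ⟨x2, hx2s, hx2t⟩ := h2
  have hx1 : x1 ∈ interior t := by
    rcases hsub hx1s with h | h
    · exact h
    · exact absurd (subset_closure hx1t) h
  have hx2 : x2 ∈ (closure t)ᶜ := by
    rcases hsub hx2s with h | h
    · exact absurd (interior_subset h) hx2t
    · exact h
  obtain ⟨z, hz⟩ := hs (interior t) (closure t)ᶜ isOpen_interior isClosed_closure.isOpen_compl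
    hsub ⟨x1, hx1s, hx1⟩ ⟨x2, hx2s, hx2⟩
  exact hz.2.2 (subset_closure (interior_subset hz.2.1))

private lemma inner_deriv_eq {k : ℕ} (ν : EuclideanSpace ℝ (Fin k))
    {f : ℝ → EuclideanSpace ℝ (Fin k)} {x : ℝ} (hf : DifferentiableAt ℝ f x) :
    deriv (fun s => (inner ℝ ν (f s) : ℝ)) x = inner ℝ ν (deriv f x) := by
  have h := ((hasDerivAt_const x ν).inner ℝ hf.hasDerivAt).deriv
  simpa using h

private lemma inner_deriv_sub {k : ℕ} (ν v : EuclideanSpace ℝ (Fin k))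
    {f : ℝ → EuclideanSpace ℝ (Fin k)} {x : ℝ} (hf : DifferentiableAt ℝ f x) :
    deriv (fun s => (inner ℝ ν (f s - v) : ℝ)) x = inner ℝ ν (deriv f x) := by
  have he : (fun s => (inner ℝ ν (f s - v) : ℝ))
      = fun s => (inner ℝ ν (f s) : ℝ) - (inner ℝ ν v : ℝ) := by
    funext s; rw [inner_sub_right]
  rw [he, deriv_sub_const, inner_deriv_eq ν hf]

/-- For `u : Ω → ℝ^k` of class `C²` solving `u_t = Δu + φ(u)` with `φ`
`p`-Lipschitz, `u` valued in a closed convex set `K` compatible with `φ`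
(`φ(v)·ν ≥ 0` for all inward pointing unit vectors `ν` at `v ∈ ∂K`), if `v ∈ ∂K` is a
nearest boundary point to `u(x̂,t̂)` and `ℓ(z) = ν·(z−v)` is a supporting affine functional
at `v`, then `ℓ̄ = ℓ∘u` satisfies `ℓ̄_t − Δℓ̄ + p·ℓ̄ ≥ 0` at `(x̂,t̂)`. -/
theorem stmt12 {n k : ℕ} (Ω : Set (EuclideanSpace ℝ (Fin n) × ℝ)) (hΩ : IsOpen Ω)
    (hΩt : ∀ q ∈ Ω, 0 < q.2)
    (u : EuclideanSpace ℝ (Fin n) × ℝ → EuclideanSpace ℝ (Fin k))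
    (hu : ContDiffOn ℝ 2 u Ω)
    (φ : EuclideanSpace ℝ (Fin k) → EuclideanSpace ℝ (Fin k))
    (p : ℝ) (hp : 0 ≤ p) (hφ : LipschitzWith (Real.toNNReal p) φ)
    (heqn : ∀ q ∈ Ω,
      deriv (fun s => u (q.1, s)) q.2 =
        (∑ i : Fin n, deriv (deriv (fun y : ℝ =>
            u (q.1 + y • EuclideanSpace.single i (1:ℝ), q.2))) 0) + φ (u q))
    (K : Set (EuclideanSpace ℝ (Fin k))) (hK : IsClosed K) (hconv : Convex ℝ K)
    (huK : ∀ q ∈ Ω, u q ∈ K)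
    (hcompat : ∀ v' ∈ frontier K, ∀ ν' : EuclideanSpace ℝ (Fin k), ‖ν'‖ = 1 →
      (∀ w ∈ K, (0:ℝ) ≤ inner ℝ ν' (w - v')) → (0:ℝ) ≤ inner ℝ ν' (φ v'))
    (xhat : EuclideanSpace ℝ (Fin n)) (that : ℝ) (hq : (xhat, that) ∈ Ω)
    (v : EuclideanSpace ℝ (Fin k)) (hv : v ∈ frontier K)
    (hnear : dist (u (xhat, that)) v = infDist (u (xhat, that)) (frontier K))
    (ν : EuclideanSpace ℝ (Fin k)) (hν : ‖ν‖ = 1)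
    (hsupp : ∀ w ∈ K, (0:ℝ) ≤ inner ℝ ν (w - v)) :
    0 ≤ deriv (fun s => (inner ℝ ν (u (xhat, s) - v) : ℝ)) that
        - (∑ i : Fin n, deriv (deriv (fun y : ℝ =>
            (inner ℝ ν (u (xhat + y • EuclideanSpace.single i (1:ℝ), that) - v) : ℝ))) 0)
        + p * (inner ℝ ν (u (xhat, that) - v) : ℝ) := by
  classical
  set a := u (xhat, that) with ha
  have haK : a ∈ K := huK _ hq
  -- Step 1: segment points a - t • ν stay in K for 0 ≤ t < dist a v
  have hseg : ∀ t : ℝ, 0 ≤ t → t < dist a v → a - t • ν ∈ K := by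
    intro t ht htd
    by_contra hnot
    have hpre : IsPreconnected (segment ℝ a (a - t • ν)) :=
      (convex_segment a (a - t • ν)).isPreconnected
    obtain ⟨c, hcs, hcf⟩ := cross_frontier hpre
      ⟨a, left_mem_segment ℝ a (a - t • ν), haK⟩
      ⟨a - t • ν, right_mem_segment ℝ a (a - t • ν), hnot⟩
    -- c = a - (q*t) • ν for some q ∈ [0,1], so dist a c ≤ t
    obtain ⟨p1, q1, hp1, hq1, hpq, hc⟩ := hcs
    have hdistac : dist a c ≤ t := by
      have hceq : c = a - (q1 * t) • ν := by
        have hp1e : p1 = 1 - q1 := by linarith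
        rw [← hc, hp1e]
        module
      rw [hceq]
      have : dist a (a - (q1 * t) • ν) = ‖(q1 * t) • ν‖ := by
        rw [dist_eq_norm]
        congr 1
        abel
      rw [this, norm_smul, hν]
      simp only [mul_one, Real.norm_eq_abs]
      rw [abs_of_nonneg (mul_nonneg hq1 ht)]
      calc q1 * t ≤ 1 * t := by nlinarith
        _ = t := one_mul t
    have : infDist a (frontier K) ≤ dist a c := infDist_le_dist_of_mem hcf
    rw [← hnear] at this
    linarith
  -- Step 2: dist a v ≤ ⟪ν, a - v⟫
  have hl0 : (0:ℝ) ≤ inner ℝ ν (a - v) := hsupp a haK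
  have hlge : dist a v ≤ (inner ℝ ν (a - v) : ℝ) := by
    by_contra hlt
    push_neg at hlt
    set t := ((inner ℝ ν (a - v) : ℝ) + dist a v) / 2 with htdef
    have ht0 : 0 ≤ t := by positivity
    have htd : t < dist a v := by rw [htdef]; linarith
    have hmem := hseg t ht0 htd
    have := hsupp _ hmem
    have hcalc : (inner ℝ ν (a - t • ν - v) : ℝ)
        = (inner ℝ ν (a - v) : ℝ) - t * ((inner ℝ ν ν : ℝ)) := by
      have : a - t • ν - v = (a - v) - t • ν := by abel
      rw [this, inner_sub_right, inner_smul_right]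
    have hνν : (inner ℝ ν ν : ℝ) = 1 := by
      rw [real_inner_self_eq_norm_sq, hν]; norm_num
    rw [hcalc, hνν] at this
    rw [htdef] at this
    linarith
  -- Step 3: derivative computations
  have hCu : ContDiffAt ℝ 2 u (xhat, that) := hu.contDiffAt (hΩ.mem_nhds hq)
  -- time derivative
  have hdiffu : DifferentiableAt ℝ u (xhat, that) :=
    hCu.differentiableAt (by norm_num)
  have hcurve : DifferentiableAt ℝ (fun s : ℝ => ((xhat, s) : EuclideanSpace ℝ (Fin n) × ℝ)) that :=
    (differentiableAt_const _).prodMk differentiableAt_id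
  have hdf0 : DifferentiableAt ℝ (fun s => u (xhat, s)) that := hdiffu.comp that hcurve
  have ht_eq : deriv (fun s => (inner ℝ ν (u (xhat, s) - v) : ℝ)) that
      = inner ℝ ν (deriv (fun s => u (xhat, s)) that) := inner_deriv_sub ν v hdf0
  -- spatial derivatives
  have hspace : ∀ i : Fin n,
      deriv (deriv (fun y : ℝ =>
          (inner ℝ ν (u (xhat + y • EuclideanSpace.single i (1:ℝ), that) - v) : ℝ))) 0
      = inner ℝ ν (deriv (deriv (fun y : ℝ =>
          u (xhat + y • EuclideanSpace.single i (1:ℝ), that))) 0) := by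
    intro i
    set c : ℝ → EuclideanSpace ℝ (Fin n) × ℝ :=
      fun y => (xhat + y • EuclideanSpace.single i (1:ℝ), that) with hcdef
    set f : ℝ → EuclideanSpace ℝ (Fin k) := fun y => u (c y) with hfdef
    have hcC : ContDiff ℝ 2 c := by
      apply ContDiff.prodMk
      · exact contDiff_const.add (contDiff_id.smul contDiff_const)
      · exact contDiff_const
    set S : Set ℝ := c ⁻¹' Ω with hSdef
    have hSopen : IsOpen S := hΩ.preimage hcC.continuous
    have h0S : (0:ℝ) ∈ S := by
      show c 0 ∈ Ω
      simp only [hcdef, zero_smul, add_zero]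
      exact hq
    have hfC : ContDiffOn ℝ 2 f S :=
      hu.comp hcC.contDiffOn (fun y hy => hy)
    have hfd : ∀ y ∈ S, DifferentiableAt ℝ f y := fun y hy =>
      ((hfC y hy).differentiableWithinAt (by norm_num)).differentiableAt
        (hSopen.mem_nhds hy)
    have hderivC : ContDiffOn ℝ 1 (deriv f) S := by
      have := hfC.deriv_of_isOpen (m := 1) hSopen (by norm_num)
      exact this.of_le (by norm_num)
    have hdfd : DifferentiableAt ℝ (deriv f) 0 :=
      ((hderivC 0 h0S).differentiableWithinAt (by norm_num)).differentiableAt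
        (hSopen.mem_nhds h0S)
    have heq1 : (fun y => deriv (fun z => (inner ℝ ν (f z - v) : ℝ)) y)
        =ᶠ[nhds (0:ℝ)] (fun y => (inner ℝ ν (deriv f y) : ℝ)) := by
      filter_upwards [hSopen.mem_nhds h0S] with y hy
      exact inner_deriv_sub ν v (hfd y hy)
    calc deriv (deriv (fun y : ℝ =>
          (inner ℝ ν (u (xhat + y • EuclideanSpace.single i (1:ℝ), that) - v) : ℝ))) 0
        = deriv (fun y => (inner ℝ ν (deriv f y) : ℝ)) 0 := heq1.deriv_eq
      _ = inner ℝ ν (deriv (deriv f) 0) := inner_deriv_eq ν hdfd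
  -- put it together
  rw [ht_eq]
  simp only [hspace]
  rw [← inner_sum]
  have heqn' := heqn (xhat, that) hq
  rw [heqn']
  rw [inner_add_right]
  have hkey : (0:ℝ) ≤ (inner ℝ ν (φ a) : ℝ) + p * (inner ℝ ν (a - v) : ℝ) := by
    have hφv : (0:ℝ) ≤ inner ℝ ν (φ v) := hcompat v hv ν hν hsupp
    have hCS : |(inner ℝ ν (φ a - φ v) : ℝ)| ≤ ‖φ a - φ v‖ := by
      calc |(inner ℝ ν (φ a - φ v) : ℝ)| ≤ ‖ν‖ * ‖φ a - φ v‖ := abs_real_inner_le_norm ν _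
        _ = ‖φ a - φ v‖ := by rw [hν, one_mul]
    have hlip : ‖φ a - φ v‖ ≤ p * dist a v := by
      have := hφ.dist_le_mul a v
      rw [Real.coe_toNNReal p hp] at this
      rwa [← dist_eq_norm]
    have h1 : (inner ℝ ν (φ a) : ℝ) = (inner ℝ ν (φ v) : ℝ) + (inner ℝ ν (φ a - φ v) : ℝ) := by
      rw [← inner_add_right]
      congr 1
      abel
    have h2 : -(p * dist a v) ≤ (inner ℝ ν (φ a - φ v) : ℝ) := by
      have := neg_abs_le (inner ℝ ν (φ a - φ v) : ℝ)
      linarith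
    have h3 : p * dist a v ≤ p * (inner ℝ ν (a - v) : ℝ) :=
      mul_le_mul_of_nonneg_left hlge hp
    linarith
  ring_nf
  ring_nf at hkey
  linarith
end
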